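/- There is an absolute constant C > 0 such that for all w, z ∈ ℂ with w ≠ 0, −z/w ∉ ℤ, and |Im(z/w)| ≥ |Re(z/w)|, and all integers N ≥ 1: |pv ∑_{n∈ℤ} 1/(wn + z) − ∑_{n=−N}^{N} 1/(wn + z)| ≤ C·|z|/(|w|²·N), where pv ∑_{n∈ℤ} 1/(wn+z) denotes the limit of the symmetric partial sums ∑_{n=−N}^{N} 1/(wn+z). -/

import Mathlib

open Finset Filter

theorem pv_lattice_sum_truncation :
    ∃ C : ℝ, 0 < C ∧ ∀ (w z : ℂ), w ≠ 0 → (∀ n : ℤ, -z / w ≠ (n : ℂ)) →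
      |(z / w).re| ≤ |(z / w).im| → ∀ N : ℕ, 1 ≤ N → ∀ L : ℂ,
      Filter.Tendsto
        (fun M : ℕ => ∑ n ∈ Finset.Icc (-(M:ℤ)) (M:ℤ), 1 / (w * (n:ℂ) + z))
        Filter.atTop (nhds L) →
      ‖L - ∑ n ∈ Finset.Icc (-(N:ℤ)) (N:ℤ), 1 / (w * (n:ℂ) + z)‖ ≤
        C * ‖z‖ / (‖w‖ ^ 2 * N) := by
  refine ⟨2, two_pos, ?_⟩
  intro w z hw hz hri N hN L hL
  set f : ℤ → ℂ := fun n => 1 / (w * (n:ℂ) + z) with hf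
  set S : ℕ → ℂ := fun M => ∑ n ∈ Finset.Icc (-(M:ℤ)) (M:ℤ), f n with hS
  set K : ℝ := 2 * ‖z‖ / ‖w‖ ^ 2 with hK
  have hwabs : (0:ℝ) < ‖w‖ := norm_pos_iff.mpr hw
  have hKnn : 0 ≤ K := by
    rw [hK]; positivity
  have hden : ∀ n : ℤ, w * (n:ℂ) + z ≠ 0 := by
    intro n h
    apply hz n
    rw [div_eq_iff hw]
    linear_combination -h
  have hre2 : ((z/w)^2).re ≤ 0 := by
    have h1 : ((z/w)^2).re = (z/w).re * (z/w).re - (z/w).im * (z/w).im := by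
      rw [pow_two, Complex.mul_re]
    rw [h1]
    nlinarith [abs_nonneg (z/w).re, abs_nonneg (z/w).im, sq_abs (z/w).re,
      sq_abs (z/w).im, hri]
  have key : ∀ m : ℤ, 1 ≤ m → ‖f m + f (-m)‖ ≤ K / (m:ℝ)^2 := by
    intro m hm
    have hm0 : (0:ℝ) < (m:ℝ) := by exact_mod_cast hm.trans_lt' zero_lt_one
    have ha := hden m
    have hb := hden (-m)
    have hb' : w * (-(m:ℂ)) + z ≠ 0 := by push_cast at hb; exact hb
    have e1 : f m + f (-m) = 2 * z / (w^2 * ((z/w)^2 - (m:ℂ)^2)) := by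
      have e0 : w^2 * ((z/w)^2 - (m:ℂ)^2) = (w * (m:ℂ) + z) * (w * (-(m:ℂ)) + z) := by
        field_simp
        ring
      simp only [hf]
      push_cast
      rw [e0, div_add_div _ _ ha hb']
      congr 1
      ring
    have e3 : ((m:ℝ)^2) ≤ ‖(z/w)^2 - (m:ℂ)^2‖ := by
      set u := (z/w)^2 with hu
      have h1 : ‖u - (m:ℂ)^2‖ ^ 2 = (u.re - (m:ℝ)^2)^2 + u.im^2 := by
        have hcre : ((m:ℂ)^2) = ((((m:ℝ)^2 : ℝ)):ℂ) := by push_cast; ring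
        rw [Complex.sq_norm, Complex.normSq_apply, hcre, Complex.sub_re, Complex.sub_im,
          Complex.ofReal_re, Complex.ofReal_im]
        ring
      nlinarith [norm_nonneg (u - (m:ℂ)^2), sq_nonneg u.im, sq_nonneg ((m:ℝ)),
        mul_pos hm0 hm0]
    have e4 : ‖f m + f (-m)‖
        = 2 * ‖z‖ / (‖w‖ ^ 2 * ‖(z/w)^2 - (m:ℂ)^2‖) := by
      rw [e1, norm_div, norm_mul, norm_mul, norm_pow, Complex.norm_two]
    rw [e4, hK, div_div]
    gcongr
  -- induction bound
  have main : ∀ M : ℕ, N ≤ M →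
      ‖S M - S N‖ ≤ K * ((N:ℝ)⁻¹ - (M:ℝ)⁻¹) := by
    intro M hM
    induction M with
    | zero => omega
    | succ M ih =>
      rcases eq_or_lt_of_le hM with heq | hlt
      · rw [← heq]; simp
      · have hM' : N ≤ M := by omega
        have hM1 : 1 ≤ M := le_trans hN hM'
        have hMR : (1:ℝ) ≤ (M:ℝ) := by exact_mod_cast hM1
        have hsplit : S (M+1) = S M + (f ((M:ℤ)+1) + f (-((M:ℤ)+1))) := by
          have h1 : (-((M:ℤ)+1)) ∉ insert ((M:ℤ)+1) (Finset.Icc (-(M:ℤ)) (M:ℤ)) := by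
            simp only [Finset.mem_insert, Finset.mem_Icc]
            omega
          have h2 : ((M:ℤ)+1) ∉ Finset.Icc (-(M:ℤ)) (M:ℤ) := by
            simp only [Finset.mem_Icc]; omega
          have hset : Finset.Icc (-((M:ℤ)+1)) ((M:ℤ)+1)
              = insert (-((M:ℤ)+1)) (insert ((M:ℤ)+1) (Finset.Icc (-(M:ℤ)) (M:ℤ))) := by
            ext x
            simp only [Finset.mem_Icc, Finset.mem_insert]
            omega
          simp only [hS]
          push_cast
          rw [hset, Finset.sum_insert h1, Finset.sum_insert h2]
          ring
        have hkey := key ((M:ℤ)+1) (by omega)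
        have hcast : (((M:ℤ)+1 : ℤ):ℝ) = (M:ℝ) + 1 := by push_cast; ring
        rw [hcast] at hkey
        have step1 : ‖S (M+1) - S N‖
            ≤ ‖S M - S N‖ + ‖f ((M:ℤ)+1) + f (-((M:ℤ)+1))‖ := by
          rw [hsplit]
          calc ‖S M + (f ((M:ℤ)+1) + f (-((M:ℤ)+1))) - S N‖
              = ‖(S M - S N) + (f ((M:ℤ)+1) + f (-((M:ℤ)+1)))‖ := by ring_nf
            _ ≤ _ := norm_add_le _ _
        have hid : ((M:ℝ))⁻¹ - ((M:ℝ)+1)⁻¹ - (((M:ℝ)+1)^2)⁻¹ = ((M:ℝ)*((M:ℝ)+1)^2)⁻¹ := by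
          field_simp
          ring
        have hpos : (0:ℝ) < ((M:ℝ)*((M:ℝ)+1)^2)⁻¹ := by positivity
        have h5 : K / ((M:ℝ)+1)^2 ≤ K * (((M:ℝ))⁻¹ - ((M:ℝ)+1)⁻¹) := by
          rw [div_eq_mul_inv]
          apply mul_le_mul_of_nonneg_left _ hKnn
          linarith
        calc ‖S (M+1) - S N‖
            ≤ ‖S M - S N‖ + ‖f ((M:ℤ)+1) + f (-((M:ℤ)+1))‖ := step1
          _ ≤ K * ((N:ℝ)⁻¹ - (M:ℝ)⁻¹) + K / ((M:ℝ)+1)^2 := add_le_add (ih hM') hkey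
          _ ≤ K * ((N:ℝ)⁻¹ - ((M:ℝ)+1)⁻¹) := by
              have hexp : K * ((N:ℝ)⁻¹ - (M:ℝ)⁻¹) + K * (((M:ℝ))⁻¹ - ((M:ℝ)+1)⁻¹)
                  = K * ((N:ℝ)⁻¹ - ((M:ℝ)+1)⁻¹) := by ring
              linarith [h5]
          _ = K * ((N:ℝ)⁻¹ - ((M+1:ℕ):ℝ)⁻¹) := by push_cast; ring
  -- pass to the limit
  have hT : Tendsto (fun M : ℕ => ‖S M - S N‖) atTop
      (nhds (‖L - S N‖)) := by
    have h := (hL.sub (tendsto_const_nhds (x := S N))).norm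
    simpa [hS, hf] using h
  have hNR : (0:ℝ) < (N:ℝ) := by exact_mod_cast hN.trans_lt' zero_lt_one
  have hfin : ‖L - S N‖ ≤ K * (N:ℝ)⁻¹ := by
    refine le_of_tendsto hT ?_
    filter_upwards [eventually_ge_atTop N] with M hM
    have h1 := main M hM
    have h2 : (0:ℝ) ≤ (M:ℝ)⁻¹ := by positivity
    nlinarith [hKnn]
  calc ‖L - ∑ n ∈ Finset.Icc (-(N:ℤ)) (N:ℤ), 1 / (w * (n:ℂ) + z)‖
      = ‖L - S N‖ := by simp [hS, hf]
    _ ≤ K * (N:ℝ)⁻¹ := hfin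
    _ = 2 * ‖z‖ / (‖w‖ ^ 2 * N) := by
        rw [hK]
        field_simp
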